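/- Let A be a unital C*-algebra, ε ∈ A a grading operator (selfadjoint unitary), p = (1+ε)/2 and q = (1−ε)/2, and let ω = a·p + b·q where a, b ∈ ℂ with |a| = |b| = 1 (so ω is a unitary element of the commutative C*-subalgebra generated by 1 and ε). Then for x ∈ A the following are equivalent: (i) x is ω-hermitian of norm at most one, i.e. x = ω x* ω and ‖x‖ ≤ 1; (ii) for every t ∈ ℝ one has ‖x − i·t·ω‖ ≤ √(1 + t²). (Lemma 2.) -/

import Mathlib

lemma norm_one_le_cstar {A : Type*} [CStarAlgebra A] : ‖(1:A)‖ ≤ 1 := by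
  have h : ‖(1:A)‖ * ‖(1:A)‖ = ‖(1:A)‖ := by
    rw [← CStarRing.norm_star_mul_self (x := (1:A)), star_one, one_mul]
  nlinarith [norm_nonneg (1:A)]

lemma expand_cstar {A : Type*} [CStarAlgebra A] (w : A) (t : ℝ) :
    star (w - (Complex.I * (t:ℂ)) • 1) * (w - (Complex.I * (t:ℂ)) • 1)
      = star w * w + (Complex.I * (t:ℂ)) • (w - star w) + ((t:ℂ)^2) • 1 := by
  have hstar : star (w - (Complex.I * (t:ℂ)) • (1:A))
      = star w + (Complex.I * (t:ℂ)) • (1:A) := by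
    rw [star_sub, star_smul, star_one]
    rw [show star (Complex.I * (t:ℂ)) = -(Complex.I * (t:ℂ)) by
      simp [Complex.star_def, map_mul, Complex.conj_I]]
    module
  rw [hstar]
  simp only [add_mul, mul_sub, smul_mul_assoc, mul_smul_comm, smul_smul, one_mul,
    mul_one, smul_sub, smul_add]
  rw [show Complex.I * (t:ℂ) * (Complex.I * (t:ℂ)) = -((t:ℂ)^2) by
    linear_combination (t:ℂ)^2 * Complex.I_sq]
  module

lemma aux_sa_iff {A : Type*} [CStarAlgebra A] (y : A) :
    (star y = y ∧ ‖y‖ ≤ 1) ↔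
    ∀ t : ℝ, ‖y - (Complex.I * (t : ℂ)) • (1 : A)‖ ≤ Real.sqrt (1 + t ^ 2) := by
  have hcoe : ∀ (r : ℝ) (v : A), ((r:ℂ)) • v = r • v := fun r v => by
    rw [← smul_one_smul ℂ r v]; norm_num
  constructor
  · rintro ⟨hsa, hn⟩ t
    set z := y - (Complex.I * (t:ℂ)) • (1:A) with hzdef
    have hz : star z * z = y * y + ((t:ℂ)^2) • (1:A) := by
      rw [hzdef, expand_cstar, hsa, sub_self, smul_zero, add_zero]
    have hsq : ‖z‖ ^ 2 ≤ 1 + t ^ 2 := by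
      have h1 : ‖z‖ ^ 2 = ‖star z * z‖ := by
        rw [CStarRing.norm_star_mul_self, sq]
      rw [h1, hz]
      calc ‖y * y + ((t:ℂ)^2) • (1:A)‖ ≤ ‖y * y‖ + ‖((t:ℂ)^2) • (1:A)‖ := norm_add_le _ _
        _ ≤ ‖y‖ * ‖y‖ + t^2 * ‖(1:A)‖ := by
            gcongr
            · exact norm_mul_le _ _
            · rw [norm_smul]
              gcongr
              simp [norm_pow]
        _ ≤ 1 + t^2 := by nlinarith [norm_nonneg y, norm_one_le_cstar (A := A)]
    exact Real.le_sqrt_of_sq_le hsq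
  · intro h
    have hn : ‖y‖ ≤ 1 := by
      have := h 0
      simpa using this
    letI := CStarAlgebra.spectralOrder A
    haveI := CStarAlgebra.spectralOrderedRing A
    have halg_nonneg : ∀ r : ℝ, 0 ≤ r → (0:A) ≤ algebraMap ℝ A r := by
      intro r hr
      have h1 := star_mul_self_nonneg (algebraMap ℝ A (Real.sqrt r))
      rwa [show star (algebraMap ℝ A (Real.sqrt r)) = algebraMap ℝ A (Real.sqrt r) by
          rw [Algebra.algebraMap_eq_smul_one, star_smul, star_one, star_trivial],
        ← map_mul, Real.mul_self_sqrt hr] at h1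
    have key : ∀ t : ℝ, t • (Complex.I • (y - star y)) ≤ (1:A) := by
      intro t
      set z := y - (Complex.I * (t:ℂ)) • (1:A) with hzdef
      have hz : star z * z = (star y * y + t • (Complex.I • (y - star y)))
          + (t^2 : ℝ) • (1:A) := by
        rw [hzdef, expand_cstar]
        rw [← hcoe t (Complex.I • (y - star y)), ← hcoe (t^2) (1:A), smul_smul]
        push_cast
        module
      have h1 : ‖star z * z‖ ≤ 1 + t^2 := by
        rw [CStarRing.norm_star_mul_self]
        have h2 := h t
        have h3 : (0:ℝ) ≤ 1 + t^2 := by positivity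
        nlinarith [Real.sq_sqrt h3, Real.sqrt_nonneg (1 + t^2), norm_nonneg z]
      have h2 : star z * z ≤ algebraMap ℝ A (1 + t^2) := by
        refine le_trans (IsSelfAdjoint.le_algebraMap_norm_self (IsSelfAdjoint.star_mul_self z)) ?_
        rw [← sub_nonneg, ← map_sub]
        exact halg_nonneg _ (by linarith)
      have h3 : (star y * y + t • (Complex.I • (y - star y))) + (t^2 : ℝ) • (1:A)
          ≤ 1 + (t^2 : ℝ) • (1:A) := by
        rw [← hz]
        refine h2.trans_eq ?_
        rw [show (1 + t^2 : ℝ) = (1:ℝ) + t^2 by ring, map_add, map_one,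
          Algebra.algebraMap_eq_smul_one]
      have h4 : star y * y + t • (Complex.I • (y - star y)) ≤ 1 := le_of_add_le_add_right h3
      calc t • (Complex.I • (y - star y))
          ≤ star y * y + t • (Complex.I • (y - star y)) :=
            le_add_of_nonneg_left (star_mul_self_nonneg y)
        _ ≤ 1 := h4
    have hbound : ∀ t : ℝ, |t| * ‖Complex.I • (y - star y)‖ ≤ 3 := by
      intro t
      have h1 : (0:A) ≤ t • (Complex.I • (y - star y)) + 1 := by
        have h0 := key (-t)
        rw [neg_smul] at h0
        have h0' : -(1:A) ≤ t • (Complex.I • (y - star y)) := neg_le.mp h0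
        have h0'' := sub_nonneg.mpr h0'
        rwa [sub_neg_eq_add] at h0''
      have h2 : t • (Complex.I • (y - star y)) + 1 ≤ algebraMap ℝ A 2 := by
        calc t • (Complex.I • (y - star y)) + 1 ≤ 1 + 1 := add_le_add_left (key t) 1
          _ = algebraMap ℝ A 2 := by
            rw [show (2:ℝ) = (1:ℝ) + 1 by norm_num, map_add, map_one]
      have h3 : ‖t • (Complex.I • (y - star y)) + 1‖ ≤ 2 :=
        (CStarAlgebra.norm_le_iff_le_algebraMap _ (by norm_num) h1).mpr h2
      calc |t| * ‖Complex.I • (y - star y)‖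
          = ‖t • (Complex.I • (y - star y))‖ := by
            rw [norm_smul t (Complex.I • (y - star y)), Real.norm_eq_abs]
        _ = ‖(t • (Complex.I • (y - star y)) + 1) - 1‖ := by rw [add_sub_cancel_right]
        _ ≤ ‖t • (Complex.I • (y - star y)) + 1‖ + ‖(1:A)‖ := norm_sub_le _ _
        _ ≤ 2 + 1 := by gcongr; exact norm_one_le_cstar
        _ = 3 := by norm_num
    have hk0 : Complex.I • (y - star y) = 0 := by
      by_contra hk
      have hpos : 0 < ‖Complex.I • (y - star y)‖ := norm_pos_iff.mpr hk
      have hb := hbound (4 / ‖Complex.I • (y - star y)‖)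
      rw [abs_of_pos (by positivity), div_mul_cancel₀ _ (ne_of_gt hpos)] at hb
      linarith
    have hy : star y = y := by
      have h5 : y - star y = 0 := by
        rw [smul_eq_zero] at hk0
        exact hk0.resolve_left Complex.I_ne_zero
      rw [sub_eq_zero] at h5
      exact h5.symm
    exact ⟨hy, hn⟩

/-- **Lemma 2.** Let `A` be a unital C*-algebra, `ε ∈ A` a grading operator (selfadjoint
unitary), `p = (1+ε)/2`, `q = (1−ε)/2`, and `ω = a•p + b•q` with `a b : ℂ` of modulus one
(so `ω` is a unitary of the commutative C*-subalgebra generated by `1` and `ε`).  Then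
`x` is `ω`-hermitian of norm at most one (`x = ω x* ω` and `‖x‖ ≤ 1`) if and only if
`‖x − i t ω‖ ≤ √(1 + t²)` for every real `t`. -/
theorem lemma2_omega_hermitian_iff_norm_bound
    {A : Type*} [CStarAlgebra A]
    (ε : A) (hε_sa : star ε = ε) (hε_sq : ε * ε = 1)
    (a b : ℂ) (ha : ‖a‖ = 1) (hb : ‖b‖ = 1)
    (ω : A) (hω : ω = a • ((2⁻¹ : ℂ) • (1 + ε)) + b • ((2⁻¹ : ℂ) • (1 - ε)))
    (x : A) :
    (x = ω * star x * ω ∧ ‖x‖ ≤ 1) ↔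
    (∀ t : ℝ, ‖x - (Complex.I * (t : ℂ)) • ω‖ ≤ Real.sqrt (1 + t ^ 2)) := by
  set c : ℂ := (a + b) / 2 with hc
  set d : ℂ := (a - b) / 2 with hd
  have hω' : ω = c • (1:A) + d • ε := by
    rw [hω, hc, hd]
    match_scalars <;> ring
  have ha1 : (starRingEnd ℂ) a * a = 1 := by
    rw [Complex.conj_mul']
    norm_cast
    rw [ha]; norm_num
  have hb1 : (starRingEnd ℂ) b * b = 1 := by
    rw [Complex.conj_mul']
    norm_cast
    rw [hb]; norm_num
  have hstarω : star ω = (starRingEnd ℂ) c • (1:A) + (starRingEnd ℂ) d • ε := by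
    rw [hω', star_add, star_smul, star_smul, star_one, hε_sa]; rfl
  have hmul : ∀ (r s : ℂ) (u v : A), (r • u) * (s • v) = (r * s) • (u * v) := by
    intro r s u v
    rw [smul_mul_assoc, mul_smul_comm, smul_smul]
  have hcc : (starRingEnd ℂ) c * c + (starRingEnd ℂ) d * d = 1 := by
    rw [hc, hd]
    simp only [map_div₀, map_add, map_sub, map_ofNat]
    field_simp
    linear_combination 2 * ha1 + 2 * hb1
  have hcd : (starRingEnd ℂ) c * d + (starRingEnd ℂ) d * c = 0 := by
    rw [hc, hd]
    simp only [map_div₀, map_add, map_sub, map_ofNat]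
    field_simp
    linear_combination 2 * ha1 - 2 * hb1
  have hsω : star ω * ω = 1 := by
    rw [hstarω, hω', add_mul, mul_add, mul_add, hmul, hmul, hmul, hmul, one_mul,
      mul_one, one_mul, hε_sq]
    calc ((starRingEnd ℂ) c * c) • (1:A) + ((starRingEnd ℂ) c * d) • ε
          + (((starRingEnd ℂ) d * c) • ε + ((starRingEnd ℂ) d * d) • (1:A))
        = ((starRingEnd ℂ) c * c + (starRingEnd ℂ) d * d) • (1:A)
          + ((starRingEnd ℂ) c * d + (starRingEnd ℂ) d * c) • ε := by module
      _ = 1 := by rw [hcc, hcd]; simp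
  have hωs : ω * star ω = 1 := by
    rw [hstarω, hω', add_mul, mul_add, mul_add, hmul, hmul, hmul, hmul, one_mul,
      mul_one, one_mul, hε_sq]
    calc (c * (starRingEnd ℂ) c) • (1:A) + (c * (starRingEnd ℂ) d) • ε
          + ((d * (starRingEnd ℂ) c) • ε + (d * (starRingEnd ℂ) d) • (1:A))
        = ((starRingEnd ℂ) c * c + (starRingEnd ℂ) d * d) • (1:A)
          + ((starRingEnd ℂ) c * d + (starRingEnd ℂ) d * c) • ε := by module
      _ = 1 := by rw [hcc, hcd]; simp
  have hmem : ω ∈ unitary A := ⟨hsω, hωs⟩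
  set y : A := star ω * x with hy
  have hxy : ω * y = x := by rw [hy, ← mul_assoc, hωs, one_mul]
  have hynorm : ‖y‖ = ‖x‖ := CStarRing.norm_mem_unitary_mul x (Unitary.star_mem hmem)
  have hherm : (x = ω * star x * ω) ↔ star y = y := by
    constructor
    · intro hx
      have h1 : star y = star x * ω := by rw [hy, star_mul, star_star]
      have h2 : y = star x * ω := by
        rw [hy]
        conv_lhs => rw [hx]
        rw [← mul_assoc, ← mul_assoc, hsω, one_mul]
      rw [h1, h2]
    · intro hyy
      have h1 : star y = star x * ω := by rw [hy, star_mul, star_star]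
      calc x = ω * y := hxy.symm
        _ = ω * star y := by rw [hyy]
        _ = ω * (star x * ω) := by rw [h1]
        _ = ω * star x * ω := by rw [mul_assoc]
  have hdiff : ∀ t : ℝ, x - (Complex.I * (t:ℂ)) • ω
      = ω * (y - (Complex.I * (t:ℂ)) • (1:A)) := by
    intro t
    rw [mul_sub, hxy, mul_smul_comm, mul_one]
  constructor
  · rintro ⟨hx, hnx⟩ t
    have h1 := (aux_sa_iff y).mp ⟨hherm.mp hx, by rw [hynorm]; exact hnx⟩ t
    rw [hdiff t, CStarRing.norm_mem_unitary_mul _ hmem]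
    exact h1
  · intro h
    have h1 := (aux_sa_iff y).mpr (fun t => by
      rw [← CStarRing.norm_mem_unitary_mul (y - (Complex.I * (t:ℂ)) • (1:A)) hmem,
        ← hdiff t]
      exact h t)
    exact ⟨hherm.mpr h1.1, by rw [← hynorm]; exact h1.2⟩
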